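/- arXiv:2104.08187 — 2 statements merged into one kernel-verified Lean document; each statement's English description precedes it below -/
import Mathlib

section
/- For each p ∈ {2, 3, 5} there exists a ℤ-linear automorphism g of the E8 lattice E preserving the bilinear form B, such that g has order exactly p and {x ∈ E : g(x) = x} = {0}. -/
open scoped BigOperators

/-- The `E8` lattice: vectors in `ℚ^8` with all coordinates in `ℤ` or all in `ℤ + 1/2`,
and whose coordinate sum is even. -/
def E8set : Set (Fin 8 → ℚ) :=
  {x | ((∀ i, ∃ m : ℤ, x i = m) ∨ (∀ i, ∃ m : ℤ, x i = m + 1 / 2)) ∧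
    ∃ m : ℤ, ∑ i, x i = 2 * m}

/-- The standard bilinear form on `ℚ^8`. -/
def B8 (x y : Fin 8 → ℚ) : ℚ := ∑ i, x i * y i

namespace E8aux
open Matrix

section vecEval
variable {α : Type*} (a0 a1 a2 a3 a4 a5 a6 a7 a8 : α)
@[simp] lemma vec8_0 : (![a0,a1,a2,a3,a4,a5,a6,a7] : Fin 8 → α) 0 = a0 := rfl
@[simp] lemma vec8_1 : (![a0,a1,a2,a3,a4,a5,a6,a7] : Fin 8 → α) 1 = a1 := rfl
@[simp] lemma vec8_2 : (![a0,a1,a2,a3,a4,a5,a6,a7] : Fin 8 → α) 2 = a2 := rfl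
@[simp] lemma vec8_3 : (![a0,a1,a2,a3,a4,a5,a6,a7] : Fin 8 → α) 3 = a3 := rfl
@[simp] lemma vec8_4 : (![a0,a1,a2,a3,a4,a5,a6,a7] : Fin 8 → α) 4 = a4 := rfl
@[simp] lemma vec8_5 : (![a0,a1,a2,a3,a4,a5,a6,a7] : Fin 8 → α) 5 = a5 := rfl
@[simp] lemma vec8_6 : (![a0,a1,a2,a3,a4,a5,a6,a7] : Fin 8 → α) 6 = a6 := rfl
@[simp] lemma vec8_7 : (![a0,a1,a2,a3,a4,a5,a6,a7] : Fin 8 → α) 7 = a7 := rfl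
@[simp] lemma vec9_8 : (![a0,a1,a2,a3,a4,a5,a6,a7,a8] : Fin 9 → α) 8 = a8 := rfl
end vecEval


lemma E8_add {x y : Fin 8 → ℚ} (hx : x ∈ E8set) (hy : y ∈ E8set) : x + y ∈ E8set := by
  obtain ⟨hx1, mx, hmx⟩ := hx
  obtain ⟨hy1, my, hmy⟩ := hy
  refine ⟨?_, mx + my, ?_⟩
  · rcases hx1 with h | h <;> rcases hy1 with h' | h'
    · exact Or.inl fun i => by
        obtain ⟨a, ha⟩ := h i; obtain ⟨b, hb⟩ := h' i
        exact ⟨a + b, by rw [Pi.add_apply, ha, hb]; push_cast; ring⟩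
    · exact Or.inr fun i => by
        obtain ⟨a, ha⟩ := h i; obtain ⟨b, hb⟩ := h' i
        exact ⟨a + b, by rw [Pi.add_apply, ha, hb]; push_cast; ring⟩
    · exact Or.inr fun i => by
        obtain ⟨a, ha⟩ := h i; obtain ⟨b, hb⟩ := h' i
        exact ⟨a + b, by rw [Pi.add_apply, ha, hb]; push_cast; ring⟩
    · exact Or.inl fun i => by
        obtain ⟨a, ha⟩ := h i; obtain ⟨b, hb⟩ := h' i
        exact ⟨a + b + 1, by rw [Pi.add_apply, ha, hb]; push_cast; ring⟩
  · have : ∑ i, (x + y) i = (∑ i, x i) + ∑ i, y i := by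
      simp [Finset.sum_add_distrib]
    rw [this, hmx, hmy]; push_cast; ring

lemma E8_neg {x : Fin 8 → ℚ} (hx : x ∈ E8set) : -x ∈ E8set := by
  obtain ⟨hx1, mx, hmx⟩ := hx
  refine ⟨?_, -mx, ?_⟩
  · rcases hx1 with h | h
    · exact Or.inl fun i => by
        obtain ⟨a, ha⟩ := h i
        exact ⟨-a, by rw [Pi.neg_apply, ha]; push_cast; ring⟩
    · exact Or.inr fun i => by
        obtain ⟨a, ha⟩ := h i
        exact ⟨-(a + 1), by rw [Pi.neg_apply, ha]; push_cast; ring⟩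
  · have : ∑ i, (-x) i = -∑ i, x i := by simp
    rw [this, hmx]; push_cast; ring

lemma E8_zero : (0 : Fin 8 → ℚ) ∈ E8set :=
  ⟨Or.inl fun _ => ⟨0, by norm_num⟩, 0, by norm_num⟩

def E8grp : AddSubgroup (Fin 8 → ℚ) where
  carrier := E8set
  add_mem' := E8_add
  zero_mem' := E8_zero
  neg_mem' := E8_neg

lemma memE8_int (x : Fin 8 → ℚ) (w : Fin 8 → ℤ) (hw : ∀ i, x i = w i) (s : ℤ)
    (hs : ∑ i, (w i : ℚ) = 2 * s) : x ∈ E8set := by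
  refine ⟨Or.inl fun i => ⟨w i, hw i⟩, s, ?_⟩
  rw [show ∑ i, x i = ∑ i, (w i : ℚ) from Finset.sum_congr rfl fun i _ => hw i, hs]

lemma memE8_half (x : Fin 8 → ℚ) (w : Fin 8 → ℤ) (hw : ∀ i, x i = w i + 1/2) (s : ℤ)
    (hs : (∑ i, (w i : ℚ)) + 4 = 2 * s) : x ∈ E8set := by
  refine ⟨Or.inr fun i => ⟨w i, hw i⟩, s, ?_⟩
  rw [show ∑ i, x i = ∑ i, ((w i : ℚ) + 1/2) from Finset.sum_congr rfl fun i _ => hw i,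
    Finset.sum_add_distrib]
  norm_num
  linarith

def g0 : Fin 8 → ℚ := ![1,-1,0,0,0,0,0,0]
def g1 : Fin 8 → ℚ := ![0,1,-1,0,0,0,0,0]
def g2 : Fin 8 → ℚ := ![0,0,1,-1,0,0,0,0]
def g3 : Fin 8 → ℚ := ![0,0,0,1,-1,0,0,0]
def g4 : Fin 8 → ℚ := ![0,0,0,0,1,-1,0,0]
def g5 : Fin 8 → ℚ := ![0,0,0,0,0,1,-1,0]
def g6 : Fin 8 → ℚ := ![0,0,0,0,0,0,1,-1]
def g7 : Fin 8 → ℚ := ![0,0,0,0,0,0,1,1]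
def g8 : Fin 8 → ℚ := ![1/2,1/2,1/2,1/2,1/2,1/2,1/2,1/2]

def gvec : Fin 9 → (Fin 8 → ℚ) := ![g0,g1,g2,g3,g4,g5,g6,g7,g8]

abbrev Ecl : AddSubgroup (Fin 8 → ℚ) := AddSubgroup.closure (Set.range gvec)

lemma int_decomp (m : Fin 8 → ℤ) (s : ℤ) (hs : ∑ i, m i = 2 * s) :
    (fun i => (m i : ℚ)) ∈ Ecl := by
  have hs' : (m 0 : ℚ) + m 1 + m 2 + m 3 + m 4 + m 5 + m 6 + m 7 = 2 * s := by
    have := congrArg (fun z : ℤ => (z : ℚ)) hs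
    push_cast at this
    rw [Fin.sum_univ_eight] at this
    linarith [this]
  have key : (fun i => (m i : ℚ)) =
      (m 0) • g0 + (m 0 + m 1) • g1 + (m 0 + m 1 + m 2) • g2 +
      (m 0 + m 1 + m 2 + m 3) • g3 + (m 0 + m 1 + m 2 + m 3 + m 4) • g4 +
      (m 0 + m 1 + m 2 + m 3 + m 4 + m 5) • g5 + (s - m 7) • g6 + s • g7 := by
    funext i
    simp only [Pi.add_apply, Pi.smul_apply, zsmul_eq_mul]
    fin_cases i <;> simp [g0,g1,g2,g3,g4,g5,g6,g7] <;> push_cast <;> linarith [hs']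
  rw [key]
  have m0 : g0 ∈ Ecl := AddSubgroup.subset_closure ⟨0, rfl⟩
  have m1 : g1 ∈ Ecl := AddSubgroup.subset_closure ⟨1, rfl⟩
  have m2 : g2 ∈ Ecl := AddSubgroup.subset_closure ⟨2, rfl⟩
  have m3 : g3 ∈ Ecl := AddSubgroup.subset_closure ⟨3, rfl⟩
  have m4 : g4 ∈ Ecl := AddSubgroup.subset_closure ⟨4, rfl⟩
  have m5 : g5 ∈ Ecl := AddSubgroup.subset_closure ⟨5, rfl⟩
  have m6 : g6 ∈ Ecl := AddSubgroup.subset_closure ⟨6, rfl⟩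
  have m7 : g7 ∈ Ecl := AddSubgroup.subset_closure ⟨7, rfl⟩
  exact add_mem (add_mem (add_mem (add_mem (add_mem (add_mem (add_mem
    (zsmul_mem m0 _) (zsmul_mem m1 _)) (zsmul_mem m2 _)) (zsmul_mem m3 _))
    (zsmul_mem m4 _)) (zsmul_mem m5 _)) (zsmul_mem m6 _)) (zsmul_mem m7 _)

lemma decomp {x : Fin 8 → ℚ} (hx : x ∈ E8set) : x ∈ Ecl := by
  obtain ⟨h1, s, hs⟩ := hx
  rcases h1 with h | h
  · choose m hm using h
    have hsum : ∑ i, m i = 2 * s := by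
      have h2 : ((∑ i, m i : ℤ) : ℚ) = 2 * s := by
        push_cast
        rw [← hs]
        exact (Finset.sum_congr rfl fun i _ => (hm i).symm)
      exact_mod_cast h2
    have hxm : x = fun i => (m i : ℚ) := funext hm
    rw [hxm]; exact int_decomp m s hsum
  · choose m hm using h
    have hgv : ∀ i, g8 i = 1/2 := by intro i; fin_cases i <;> simp [g8]
    have hx2 : x = g8 + fun i => (m i : ℚ) := by
      funext i; rw [Pi.add_apply, hgv, hm i]; ring
    have hsum : ∑ i, m i = 2 * (s - 2) := by
      have h2 : ((∑ i, m i : ℤ) : ℚ) = 2 * (s - 2) := by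
        push_cast
        have e1 : ∑ i, x i = (∑ i, (m i : ℚ)) + 4 := by
          rw [show ∑ i, x i = ∑ i, ((m i : ℚ) + 1/2) from Finset.sum_congr rfl fun i _ => hm i,
            Finset.sum_add_distrib]
          norm_num
        rw [e1] at hs
        linarith
      exact_mod_cast h2
    rw [hx2]
    exact add_mem (AddSubgroup.subset_closure ⟨8, rfl⟩) (int_decomp m _ hsum)

lemma preserve_mem (g : (Fin 8 → ℚ) →ₗ[ℚ] (Fin 8 → ℚ))
    (hg : ∀ k : Fin 9, g (gvec k) ∈ E8set) : ∀ x ∈ E8set, g x ∈ E8set := by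
  intro x hx
  have h1 : Ecl ≤ E8grp.comap g.toAddMonoidHom := by
    rw [AddSubgroup.closure_le]
    rintro v ⟨k, rfl⟩
    exact hg k
  exact h1 (decomp hx)



def gOf (M N : Matrix (Fin 8) (Fin 8) ℚ) (h1 : M * N = 1) (h2 : N * M = 1) :
    (Fin 8 → ℚ) ≃ₗ[ℚ] (Fin 8 → ℚ) where
  toFun := M.mulVec
  invFun := N.mulVec
  map_add' := M.mulVec_add
  map_smul' c x := M.mulVec_smul c x
  left_inv x := by simp only [Matrix.mulVec_mulVec, h1, h2, Matrix.one_mulVec]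
  right_inv x := by simp only [Matrix.mulVec_mulVec, h1, h2, Matrix.one_mulVec]

lemma gOf_apply (M N : Matrix (Fin 8) (Fin 8) ℚ) (h1 h2) (x : Fin 8 → ℚ) :
    (gOf M N h1 h2) x = M.mulVec x := rfl

lemma B8_pres (M N : Matrix (Fin 8) (Fin 8) ℚ) (hT : Mᵀ = N) (hNM : N * M = 1)
    (x y : Fin 8 → ℚ) : B8 (M.mulVec x) (M.mulVec y) = B8 x y := by
  show (M.mulVec x) ⬝ᵥ (M.mulVec y) = x ⬝ᵥ y
  rw [Matrix.dotProduct_mulVec, ← Matrix.vecMul_transpose, Matrix.vecMul_vecMul, hT, hNM,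
    Matrix.vecMul_one]

lemma fixed_zero (M K : Matrix (Fin 8) (Fin 8) ℚ) (hK : K * (M - 1) = 1)
    (x : Fin 8 → ℚ) (hx : M.mulVec x = x) : x = 0 := by
  have h0 : (M - 1).mulVec x = 0 := by
    rw [Matrix.sub_mulVec, hx, Matrix.one_mulVec, sub_self]
  calc x = (K * (M - 1)).mulVec x := by rw [hK, Matrix.one_mulVec]
    _ = K.mulVec ((M - 1).mulVec x) := (Matrix.mulVec_mulVec _ _ _).symm
    _ = 0 := by rw [h0, Matrix.mulVec_zero]

def M3 : Matrix (Fin 8) (Fin 8) ℚ :=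
  !![-1/2, 0, -1/2, 1/2, -1/2, 0, 0, 0;
     0, -1/2, 0, 0, 0, 1/2, -1/2, -1/2;
     1/2, 0, -1/2, -1/2, -1/2, 0, 0, 0;
     -1/2, 0, 1/2, -1/2, -1/2, 0, 0, 0;
     1/2, 0, 1/2, 1/2, -1/2, 0, 0, 0;
     0, -1/2, 0, 0, 0, -1/2, -1/2, 1/2;
     0, 1/2, 0, 0, 0, 1/2, -1/2, 1/2;
     0, 1/2, 0, 0, 0, -1/2, -1/2, -1/2]

def N3 : Matrix (Fin 8) (Fin 8) ℚ :=
  !![-1/2, 0, 1/2, -1/2, 1/2, 0, 0, 0;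
     0, -1/2, 0, 0, 0, -1/2, 1/2, 1/2;
     -1/2, 0, -1/2, 1/2, 1/2, 0, 0, 0;
     1/2, 0, -1/2, -1/2, 1/2, 0, 0, 0;
     -1/2, 0, -1/2, -1/2, -1/2, 0, 0, 0;
     0, 1/2, 0, 0, 0, -1/2, 1/2, -1/2;
     0, -1/2, 0, 0, 0, -1/2, -1/2, -1/2;
     0, -1/2, 0, 0, 0, 1/2, 1/2, -1/2]

def P32 : Matrix (Fin 8) (Fin 8) ℚ :=
  !![-1/2, 0, 1/2, -1/2, 1/2, 0, 0, 0;
     0, -1/2, 0, 0, 0, -1/2, 1/2, 1/2;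
     -1/2, 0, -1/2, 1/2, 1/2, 0, 0, 0;
     1/2, 0, -1/2, -1/2, 1/2, 0, 0, 0;
     -1/2, 0, -1/2, -1/2, -1/2, 0, 0, 0;
     0, 1/2, 0, 0, 0, -1/2, 1/2, -1/2;
     0, -1/2, 0, 0, 0, -1/2, -1/2, -1/2;
     0, -1/2, 0, 0, 0, 1/2, 1/2, -1/2]

def K3 : Matrix (Fin 8) (Fin 8) ℚ :=
  !![-1/2, 0, 1/6, -1/6, 1/6, 0, 0, 0;
     0, -1/2, 0, 0, 0, -1/6, 1/6, 1/6;
     -1/6, 0, -1/2, 1/6, 1/6, 0, 0, 0;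
     1/6, 0, -1/6, -1/2, 1/6, 0, 0, 0;
     -1/6, 0, -1/6, -1/6, -1/2, 0, 0, 0;
     0, 1/6, 0, 0, 0, -1/2, 1/6, -1/6;
     0, -1/6, 0, 0, 0, -1/6, -1/2, -1/6;
     0, -1/6, 0, 0, 0, 1/6, 1/6, -1/2]

def M5 : Matrix (Fin 8) (Fin 8) ℚ :=
  !![-1/4, -1/4, 3/4, -1/4, 1/4, 1/4, -1/4, -1/4;
     -1/4, -1/4, -1/4, -1/4, 1/4, -3/4, -1/4, -1/4;
     -1/4, 3/4, -1/4, -1/4, 1/4, 1/4, -1/4, -1/4;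
     1/4, 1/4, 1/4, -3/4, -1/4, -1/4, 1/4, 1/4;
     -3/4, 1/4, 1/4, 1/4, -1/4, -1/4, 1/4, 1/4;
     1/4, 1/4, 1/4, 1/4, 3/4, -1/4, 1/4, 1/4;
     -1/4, -1/4, -1/4, -1/4, 1/4, 1/4, -1/4, 3/4;
     1/4, 1/4, 1/4, 1/4, -1/4, -1/4, -3/4, 1/4]

def N5 : Matrix (Fin 8) (Fin 8) ℚ :=
  !![-1/4, -1/4, -1/4, 1/4, -3/4, 1/4, -1/4, 1/4;
     -1/4, -1/4, 3/4, 1/4, 1/4, 1/4, -1/4, 1/4;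
     3/4, -1/4, -1/4, 1/4, 1/4, 1/4, -1/4, 1/4;
     -1/4, -1/4, -1/4, -3/4, 1/4, 1/4, -1/4, 1/4;
     1/4, 1/4, 1/4, -1/4, -1/4, 3/4, 1/4, -1/4;
     1/4, -3/4, 1/4, -1/4, -1/4, -1/4, 1/4, -1/4;
     -1/4, -1/4, -1/4, 1/4, 1/4, 1/4, -1/4, -3/4;
     -1/4, -1/4, -1/4, 1/4, 1/4, 1/4, 3/4, 1/4]

def P52 : Matrix (Fin 8) (Fin 8) ℚ :=
  !![-1/4, 3/4, -1/4, 1/4, 1/4, 1/4, 1/4, -1/4;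
     -1/4, -1/4, -1/4, 1/4, -3/4, 1/4, 1/4, -1/4;
     -1/4, -1/4, -1/4, 1/4, 1/4, -3/4, 1/4, -1/4;
     -1/4, -1/4, -1/4, 1/4, 1/4, 1/4, -3/4, -1/4;
     1/4, 1/4, -3/4, -1/4, -1/4, -1/4, -1/4, 1/4;
     -3/4, 1/4, 1/4, -1/4, -1/4, -1/4, -1/4, 1/4;
     1/4, 1/4, 1/4, 3/4, -1/4, -1/4, -1/4, 1/4;
     1/4, 1/4, 1/4, -1/4, -1/4, -1/4, -1/4, -3/4]

def P53 : Matrix (Fin 8) (Fin 8) ℚ :=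
  !![-1/4, -1/4, -1/4, -1/4, 1/4, -3/4, 1/4, 1/4;
     3/4, -1/4, -1/4, -1/4, 1/4, 1/4, 1/4, 1/4;
     -1/4, -1/4, -1/4, -1/4, -3/4, 1/4, 1/4, 1/4;
     1/4, 1/4, 1/4, 1/4, -1/4, -1/4, 3/4, -1/4;
     1/4, -3/4, 1/4, 1/4, -1/4, -1/4, -1/4, -1/4;
     1/4, 1/4, -3/4, 1/4, -1/4, -1/4, -1/4, -1/4;
     1/4, 1/4, 1/4, -3/4, -1/4, -1/4, -1/4, -1/4;
     -1/4, -1/4, -1/4, -1/4, 1/4, 1/4, 1/4, -3/4]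

def P54 : Matrix (Fin 8) (Fin 8) ℚ :=
  !![-1/4, -1/4, -1/4, 1/4, -3/4, 1/4, -1/4, 1/4;
     -1/4, -1/4, 3/4, 1/4, 1/4, 1/4, -1/4, 1/4;
     3/4, -1/4, -1/4, 1/4, 1/4, 1/4, -1/4, 1/4;
     -1/4, -1/4, -1/4, -3/4, 1/4, 1/4, -1/4, 1/4;
     1/4, 1/4, 1/4, -1/4, -1/4, 3/4, 1/4, -1/4;
     1/4, -3/4, 1/4, -1/4, -1/4, -1/4, 1/4, -1/4;
     -1/4, -1/4, -1/4, 1/4, 1/4, 1/4, -1/4, -3/4;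
     -1/4, -1/4, -1/4, 1/4, 1/4, 1/4, 3/4, 1/4]

def K5 : Matrix (Fin 8) (Fin 8) ℚ :=
  !![-1/2, -1/10, -3/10, 1/10, -3/10, -1/10, 0, 1/5;
     1/10, -1/2, 3/10, 1/10, 1/10, 3/10, 0, 1/5;
     3/10, -3/10, -1/2, 1/10, -1/10, 1/10, 0, 1/5;
     -1/10, -1/10, -1/10, -1/2, 1/10, 1/10, 0, 0;
     3/10, -1/10, 1/10, -1/10, -1/2, 3/10, 0, -1/5;
     1/10, -3/10, -1/10, -1/10, -3/10, -1/2, 0, -1/5;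
     0, 0, 0, 0, 0, 0, -1/2, -1/2;
     -1/5, -1/5, -1/5, 0, 1/5, 1/5, 1/2, -1/2]

set_option maxHeartbeats 2000000 in
lemma hN3M3 : N3 * M3 = 1 := by
  ext i j
  fin_cases i <;> fin_cases j <;>
    norm_num [Matrix.mul_apply, Fin.sum_univ_succ, Matrix.one_apply, Fin.ext_iff,
      Matrix.sub_apply, M3, N3, P32, K3, M5, N5, P52, P53, P54, K5]

set_option maxHeartbeats 2000000 in
lemma hM3sq : M3 * M3 = P32 := by
  ext i j
  fin_cases i <;> fin_cases j <;>
    norm_num [Matrix.mul_apply, Fin.sum_univ_succ, Matrix.one_apply, Fin.ext_iff,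
      Matrix.sub_apply, M3, N3, P32, K3, M5, N5, P52, P53, P54, K5]

set_option maxHeartbeats 2000000 in
lemma hP32M3 : P32 * M3 = 1 := by
  ext i j
  fin_cases i <;> fin_cases j <;>
    norm_num [Matrix.mul_apply, Fin.sum_univ_succ, Matrix.one_apply, Fin.ext_iff,
      Matrix.sub_apply, M3, N3, P32, K3, M5, N5, P52, P53, P54, K5]

set_option maxHeartbeats 2000000 in
lemma hK3 : K3 * (M3 - 1) = 1 := by
  ext i j
  fin_cases i <;> fin_cases j <;>
    simp [Matrix.mul_apply, Fin.sum_univ_eight, Matrix.one_apply, Matrix.sub_apply, K3, M3] <;>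
    norm_num

set_option maxHeartbeats 2000000 in
lemma hN5M5 : N5 * M5 = 1 := by
  ext i j
  fin_cases i <;> fin_cases j <;>
    norm_num [Matrix.mul_apply, Fin.sum_univ_succ, Matrix.one_apply, Fin.ext_iff,
      Matrix.sub_apply, M3, N3, P32, K3, M5, N5, P52, P53, P54, K5]

set_option maxHeartbeats 2000000 in
lemma hM5sq : M5 * M5 = P52 := by
  ext i j
  fin_cases i <;> fin_cases j <;>
    norm_num [Matrix.mul_apply, Fin.sum_univ_succ, Matrix.one_apply, Fin.ext_iff,
      Matrix.sub_apply, M3, N3, P32, K3, M5, N5, P52, P53, P54, K5]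

set_option maxHeartbeats 2000000 in
lemma hP52M5 : P52 * M5 = P53 := by
  ext i j
  fin_cases i <;> fin_cases j <;>
    norm_num [Matrix.mul_apply, Fin.sum_univ_succ, Matrix.one_apply, Fin.ext_iff,
      Matrix.sub_apply, M3, N3, P32, K3, M5, N5, P52, P53, P54, K5]

set_option maxHeartbeats 2000000 in
lemma hP53M5 : P53 * M5 = P54 := by
  ext i j
  fin_cases i <;> fin_cases j <;>
    norm_num [Matrix.mul_apply, Fin.sum_univ_succ, Matrix.one_apply, Fin.ext_iff,
      Matrix.sub_apply, M3, N3, P32, K3, M5, N5, P52, P53, P54, K5]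

set_option maxHeartbeats 2000000 in
lemma hP54M5 : P54 * M5 = 1 := by
  ext i j
  fin_cases i <;> fin_cases j <;>
    norm_num [Matrix.mul_apply, Fin.sum_univ_succ, Matrix.one_apply, Fin.ext_iff,
      Matrix.sub_apply, M3, N3, P32, K3, M5, N5, P52, P53, P54, K5]

set_option maxHeartbeats 2000000 in
lemma hK5 : K5 * (M5 - 1) = 1 := by
  ext i j
  fin_cases i <;> fin_cases j <;>
    simp [Matrix.mul_apply, Fin.sum_univ_eight, Matrix.one_apply, Matrix.sub_apply, K5, M5] <;>
    norm_num

lemma hT3 : M3ᵀ = N3 := by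
  ext i j; fin_cases i <;> fin_cases j <;> norm_num [M3, N3, Matrix.transpose_apply]
lemma hT5 : M5ᵀ = N5 := by
  ext i j; fin_cases i <;> fin_cases j <;> norm_num [M5, N5, Matrix.transpose_apply]

lemma mem_M3_g0 : Matrix.mulVec M3 g0 ∈ E8set := by
  refine memE8_half _ ![-1, 0, 0, -1, 0, 0, -1, -1] ?_ (0) (by norm_num [Fin.sum_univ_succ])
  intro i
  fin_cases i <;> norm_num [Matrix.mulVec, dotProduct, Fin.sum_univ_succ, M3, g0]

lemma mem_M3_g1 : Matrix.mulVec M3 g1 ∈ E8set := by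
  refine memE8_half _ ![0, -1, 0, -1, -1, -1, 0, 0] ?_ (0) (by norm_num [Fin.sum_univ_succ])
  intro i
  fin_cases i <;> norm_num [Matrix.mulVec, dotProduct, Fin.sum_univ_succ, M3, g1]

lemma mem_M3_g2 : Matrix.mulVec M3 g2 ∈ E8set := by
  refine memE8_int _ ![-1, 0, 0, 1, 0, 0, 0, 0] ?_ (0) (by norm_num [Fin.sum_univ_succ])
  intro i
  fin_cases i <;> norm_num [Matrix.mulVec, dotProduct, Fin.sum_univ_succ, M3, g2]

lemma mem_M3_g3 : Matrix.mulVec M3 g3 ∈ E8set := by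
  refine memE8_int _ ![1, 0, 0, 0, 1, 0, 0, 0] ?_ (1) (by norm_num [Fin.sum_univ_succ])
  intro i
  fin_cases i <;> norm_num [Matrix.mulVec, dotProduct, Fin.sum_univ_succ, M3, g3]

lemma mem_M3_g4 : Matrix.mulVec M3 g4 ∈ E8set := by
  refine memE8_half _ ![-1, -1, -1, -1, -1, 0, -1, 0] ?_ (-1) (by norm_num [Fin.sum_univ_succ])
  intro i
  fin_cases i <;> norm_num [Matrix.mulVec, dotProduct, Fin.sum_univ_succ, M3, g4]

lemma mem_M3_g5 : Matrix.mulVec M3 g5 ∈ E8set := by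
  refine memE8_int _ ![0, 1, 0, 0, 0, 0, 1, 0] ?_ (1) (by norm_num [Fin.sum_univ_succ])
  intro i
  fin_cases i <;> norm_num [Matrix.mulVec, dotProduct, Fin.sum_univ_succ, M3, g5]

lemma mem_M3_g6 : Matrix.mulVec M3 g6 ∈ E8set := by
  refine memE8_int _ ![0, 0, 0, 0, 0, -1, -1, 0] ?_ (-1) (by norm_num [Fin.sum_univ_succ])
  intro i
  fin_cases i <;> norm_num [Matrix.mulVec, dotProduct, Fin.sum_univ_succ, M3, g6]

lemma mem_M3_g7 : Matrix.mulVec M3 g7 ∈ E8set := by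
  refine memE8_int _ ![0, -1, 0, 0, 0, 0, 0, -1] ?_ (-1) (by norm_num [Fin.sum_univ_succ])
  intro i
  fin_cases i <;> norm_num [Matrix.mulVec, dotProduct, Fin.sum_univ_succ, M3, g7]

lemma mem_M3_g8 : Matrix.mulVec M3 g8 ∈ E8set := by
  refine memE8_half _ ![-1, -1, -1, -1, 0, -1, 0, -1] ?_ (-1) (by norm_num [Fin.sum_univ_succ])
  intro i
  fin_cases i <;> norm_num [Matrix.mulVec, dotProduct, Fin.sum_univ_succ, M3, g8]

lemma mem_N3_g0 : Matrix.mulVec N3 g0 ∈ E8set := by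
  refine memE8_half _ ![-1, 0, -1, 0, -1, -1, 0, 0] ?_ (0) (by norm_num [Fin.sum_univ_succ])
  intro i
  fin_cases i <;> norm_num [Matrix.mulVec, dotProduct, Fin.sum_univ_succ, N3, g0]

lemma mem_N3_g1 : Matrix.mulVec N3 g1 ∈ E8set := by
  refine memE8_half _ ![-1, -1, 0, 0, 0, 0, -1, -1] ?_ (0) (by norm_num [Fin.sum_univ_succ])
  intro i
  fin_cases i <;> norm_num [Matrix.mulVec, dotProduct, Fin.sum_univ_succ, N3, g1]

lemma mem_N3_g2 : Matrix.mulVec N3 g2 ∈ E8set := by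
  refine memE8_int _ ![1, 0, -1, 0, 0, 0, 0, 0] ?_ (0) (by norm_num [Fin.sum_univ_succ])
  intro i
  fin_cases i <;> norm_num [Matrix.mulVec, dotProduct, Fin.sum_univ_succ, N3, g2]

lemma mem_N3_g3 : Matrix.mulVec N3 g3 ∈ E8set := by
  refine memE8_int _ ![-1, 0, 0, -1, 0, 0, 0, 0] ?_ (-1) (by norm_num [Fin.sum_univ_succ])
  intro i
  fin_cases i <;> norm_num [Matrix.mulVec, dotProduct, Fin.sum_univ_succ, N3, g3]

lemma mem_N3_g4 : Matrix.mulVec N3 g4 ∈ E8set := by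
  refine memE8_half _ ![0, 0, 0, 0, -1, 0, 0, -1] ?_ (1) (by norm_num [Fin.sum_univ_succ])
  intro i
  fin_cases i <;> norm_num [Matrix.mulVec, dotProduct, Fin.sum_univ_succ, N3, g4]

lemma mem_N3_g5 : Matrix.mulVec N3 g5 ∈ E8set := by
  refine memE8_int _ ![0, -1, 0, 0, 0, -1, 0, 0] ?_ (-1) (by norm_num [Fin.sum_univ_succ])
  intro i
  fin_cases i <;> norm_num [Matrix.mulVec, dotProduct, Fin.sum_univ_succ, N3, g5]

lemma mem_N3_g6 : Matrix.mulVec N3 g6 ∈ E8set := by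
  refine memE8_int _ ![0, 0, 0, 0, 0, 1, 0, 1] ?_ (1) (by norm_num [Fin.sum_univ_succ])
  intro i
  fin_cases i <;> norm_num [Matrix.mulVec, dotProduct, Fin.sum_univ_succ, N3, g6]

lemma mem_N3_g7 : Matrix.mulVec N3 g7 ∈ E8set := by
  refine memE8_int _ ![0, 1, 0, 0, 0, 0, -1, 0] ?_ (0) (by norm_num [Fin.sum_univ_succ])
  intro i
  fin_cases i <;> norm_num [Matrix.mulVec, dotProduct, Fin.sum_univ_succ, N3, g7]

lemma mem_N3_g8 : Matrix.mulVec N3 g8 ∈ E8set := by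
  refine memE8_int _ ![0, 0, 0, 0, -1, 0, -1, 0] ?_ (-1) (by norm_num [Fin.sum_univ_succ])
  intro i
  fin_cases i <;> norm_num [Matrix.mulVec, dotProduct, Fin.sum_univ_succ, N3, g8]

lemma mem_M5_g0 : Matrix.mulVec M5 g0 ∈ E8set := by
  refine memE8_int _ ![0, 0, -1, 0, -1, 0, 0, 0] ?_ (-1) (by norm_num [Fin.sum_univ_succ])
  intro i
  fin_cases i <;> norm_num [Matrix.mulVec, dotProduct, Fin.sum_univ_succ, M5, g0]

lemma mem_M5_g1 : Matrix.mulVec M5 g1 ∈ E8set := by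
  refine memE8_int _ ![-1, 0, 1, 0, 0, 0, 0, 0] ?_ (0) (by norm_num [Fin.sum_univ_succ])
  intro i
  fin_cases i <;> norm_num [Matrix.mulVec, dotProduct, Fin.sum_univ_succ, M5, g1]

lemma mem_M5_g2 : Matrix.mulVec M5 g2 ∈ E8set := by
  refine memE8_int _ ![1, 0, 0, 1, 0, 0, 0, 0] ?_ (1) (by norm_num [Fin.sum_univ_succ])
  intro i
  fin_cases i <;> norm_num [Matrix.mulVec, dotProduct, Fin.sum_univ_succ, M5, g2]

lemma mem_M5_g3 : Matrix.mulVec M5 g3 ∈ E8set := by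
  refine memE8_half _ ![-1, -1, -1, -1, 0, -1, -1, 0] ?_ (-1) (by norm_num [Fin.sum_univ_succ])
  intro i
  fin_cases i <;> norm_num [Matrix.mulVec, dotProduct, Fin.sum_univ_succ, M5, g3]

lemma mem_M5_g4 : Matrix.mulVec M5 g4 ∈ E8set := by
  refine memE8_int _ ![0, 1, 0, 0, 0, 1, 0, 0] ?_ (1) (by norm_num [Fin.sum_univ_succ])
  intro i
  fin_cases i <;> norm_num [Matrix.mulVec, dotProduct, Fin.sum_univ_succ, M5, g4]

lemma mem_M5_g5 : Matrix.mulVec M5 g5 ∈ E8set := by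
  refine memE8_half _ ![0, -1, 0, -1, -1, -1, 0, 0] ?_ (0) (by norm_num [Fin.sum_univ_succ])
  intro i
  fin_cases i <;> norm_num [Matrix.mulVec, dotProduct, Fin.sum_univ_succ, M5, g5]

lemma mem_M5_g6 : Matrix.mulVec M5 g6 ∈ E8set := by
  refine memE8_int _ ![0, 0, 0, 0, 0, 0, -1, -1] ?_ (-1) (by norm_num [Fin.sum_univ_succ])
  intro i
  fin_cases i <;> norm_num [Matrix.mulVec, dotProduct, Fin.sum_univ_succ, M5, g6]

lemma mem_M5_g7 : Matrix.mulVec M5 g7 ∈ E8set := by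
  refine memE8_half _ ![-1, -1, -1, 0, 0, 0, 0, -1] ?_ (0) (by norm_num [Fin.sum_univ_succ])
  intro i
  fin_cases i <;> norm_num [Matrix.mulVec, dotProduct, Fin.sum_univ_succ, M5, g7]

lemma mem_M5_g8 : Matrix.mulVec M5 g8 ∈ E8set := by
  refine memE8_int _ ![0, -1, 0, 0, 0, 1, 0, 0] ?_ (0) (by norm_num [Fin.sum_univ_succ])
  intro i
  fin_cases i <;> norm_num [Matrix.mulVec, dotProduct, Fin.sum_univ_succ, M5, g8]

lemma mem_N5_g0 : Matrix.mulVec N5 g0 ∈ E8set := by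
  refine memE8_int _ ![0, 0, 1, 0, 0, 1, 0, 0] ?_ (1) (by norm_num [Fin.sum_univ_succ])
  intro i
  fin_cases i <;> norm_num [Matrix.mulVec, dotProduct, Fin.sum_univ_succ, N5, g0]

lemma mem_N5_g1 : Matrix.mulVec N5 g1 ∈ E8set := by
  refine memE8_int _ ![0, -1, 0, 0, 0, -1, 0, 0] ?_ (-1) (by norm_num [Fin.sum_univ_succ])
  intro i
  fin_cases i <;> norm_num [Matrix.mulVec, dotProduct, Fin.sum_univ_succ, N5, g1]

lemma mem_N5_g2 : Matrix.mulVec N5 g2 ∈ E8set := by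
  refine memE8_half _ ![-1, 0, -1, 0, 0, 0, -1, -1] ?_ (0) (by norm_num [Fin.sum_univ_succ])
  intro i
  fin_cases i <;> norm_num [Matrix.mulVec, dotProduct, Fin.sum_univ_succ, N5, g2]

lemma mem_N5_g3 : Matrix.mulVec N5 g3 ∈ E8set := by
  refine memE8_int _ ![1, 0, 0, -1, 0, 0, 0, 0] ?_ (0) (by norm_num [Fin.sum_univ_succ])
  intro i
  fin_cases i <;> norm_num [Matrix.mulVec, dotProduct, Fin.sum_univ_succ, N5, g3]

lemma mem_N5_g4 : Matrix.mulVec N5 g4 ∈ E8set := by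
  refine memE8_int _ ![-1, 0, 0, 0, -1, 0, 0, 0] ?_ (-1) (by norm_num [Fin.sum_univ_succ])
  intro i
  fin_cases i <;> norm_num [Matrix.mulVec, dotProduct, Fin.sum_univ_succ, N5, g4]

lemma mem_N5_g5 : Matrix.mulVec N5 g5 ∈ E8set := by
  refine memE8_half _ ![0, 0, 0, 0, 0, -1, 0, -1] ?_ (1) (by norm_num [Fin.sum_univ_succ])
  intro i
  fin_cases i <;> norm_num [Matrix.mulVec, dotProduct, Fin.sum_univ_succ, N5, g5]

lemma mem_N5_g6 : Matrix.mulVec N5 g6 ∈ E8set := by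
  refine memE8_half _ ![-1, -1, -1, -1, 0, 0, 0, 0] ?_ (0) (by norm_num [Fin.sum_univ_succ])
  intro i
  fin_cases i <;> norm_num [Matrix.mulVec, dotProduct, Fin.sum_univ_succ, N5, g6]

lemma mem_N5_g7 : Matrix.mulVec N5 g7 ∈ E8set := by
  refine memE8_int _ ![0, 0, 0, 0, 0, 0, -1, 1] ?_ (0) (by norm_num [Fin.sum_univ_succ])
  intro i
  fin_cases i <;> norm_num [Matrix.mulVec, dotProduct, Fin.sum_univ_succ, N5, g7]

lemma mem_N5_g8 : Matrix.mulVec N5 g8 ∈ E8set := by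
  refine memE8_half _ ![-1, 0, 0, -1, 0, -1, -1, 0] ?_ (0) (by norm_num [Fin.sum_univ_succ])
  intro i
  fin_cases i <;> norm_num [Matrix.mulVec, dotProduct, Fin.sum_univ_succ, N5, g8]


end E8aux

open E8aux in
/-- For each `p ∈ {2, 3, 5}` there is an automorphism of the `E8` lattice, preserving the
bilinear form, of order exactly `p` and with no nonzero fixed vector in the lattice. -/
theorem exists_fixedPointFree_prime_order_isometry_E8 :
    ∀ p ∈ ({2, 3, 5} : Set ℕ),
      ∃ g : (Fin 8 → ℚ) ≃ₗ[ℚ] (Fin 8 → ℚ),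
        (∀ x, x ∈ E8set ↔ g x ∈ E8set) ∧
        (∀ x y, B8 (g x) (g y) = B8 x y) ∧
        orderOf g = p ∧
        (∀ x ∈ E8set, g x = x → x = 0) := by
  intro p hp
  have hneg1 : ∀ x : Fin 8 → ℚ, (-1 : Matrix (Fin 8) (Fin 8) ℚ).mulVec x = -x := fun x => by
    rw [Matrix.neg_mulVec, Matrix.one_mulVec]
  simp only [Set.mem_insert_iff, Set.mem_singleton_iff] at hp
  rcases hp with rfl | rfl | rfl
  · -- p = 2
    haveI : Fact (Nat.Prime 2) := ⟨by norm_num⟩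
    have h1 : (-1 : Matrix (Fin 8) (Fin 8) ℚ) * (-1) = 1 := by rw [neg_one_mul, neg_neg]
    refine ⟨gOf (-1) (-1) h1 h1, fun x => ?_, fun x y => ?_, ?_, fun x _ hfix => ?_⟩
    · rw [gOf_apply, hneg1]
      exact ⟨fun hx => E8_neg hx, fun hx => by simpa using E8_neg hx⟩
    · rw [gOf_apply, gOf_apply, hneg1, hneg1]
      simp [B8, neg_mul_neg]
    · refine orderOf_eq_prime ?_ ?_
      · refine LinearEquiv.ext fun x => ?_
        show (-1 : Matrix (Fin 8) (Fin 8) ℚ).mulVec ((-1 : Matrix (Fin 8) (Fin 8) ℚ).mulVec x) = x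
        rw [hneg1, hneg1, neg_neg]
      · intro h
        have h0 : (gOf (-1) (-1) h1 h1) ![1,0,0,0,0,0,0,0] = ![1,0,0,0,0,0,0,0] :=
          DFunLike.congr_fun h _
        rw [gOf_apply, hneg1] at h0
        have h2 := congrFun h0 0
        norm_num at h2
    · rw [gOf_apply, hneg1] at hfix
      have h2 : ∀ i, -(x i) = x i := fun i => congrFun hfix i
      funext i
      have := h2 i
      simp only [Pi.zero_apply]
      linarith
  · -- p = 3
    haveI : Fact (Nat.Prime 3) := ⟨by norm_num⟩
    have hM3N3 : M3 * N3 = 1 := mul_eq_one_comm.mpr hN3M3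
    set g := gOf M3 N3 hM3N3 hN3M3 with hg
    have hfwd : ∀ k : Fin 9, g.toLinearMap (gvec k) ∈ E8set := by
      intro k
      fin_cases k
      · exact mem_M3_g0
      · exact mem_M3_g1
      · exact mem_M3_g2
      · exact mem_M3_g3
      · exact mem_M3_g4
      · exact mem_M3_g5
      · exact mem_M3_g6
      · exact mem_M3_g7
      · exact mem_M3_g8
    have hbwd : ∀ k : Fin 9, g.symm.toLinearMap (gvec k) ∈ E8set := by
      intro k
      fin_cases k
      · exact mem_N3_g0
      · exact mem_N3_g1
      · exact mem_N3_g2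
      · exact mem_N3_g3
      · exact mem_N3_g4
      · exact mem_N3_g5
      · exact mem_N3_g6
      · exact mem_N3_g7
      · exact mem_N3_g8
    refine ⟨g, fun x => ?_, fun x y => ?_, ?_, fun x _ hfix => ?_⟩
    · constructor
      · intro hx
        exact preserve_mem g.toLinearMap hfwd x hx
      · intro hx
        have h3 := preserve_mem g.symm.toLinearMap hbwd _ hx
        simpa using h3
    · exact B8_pres M3 N3 hT3 hN3M3 x y
    · refine orderOf_eq_prime ?_ ?_
      · refine LinearEquiv.ext fun x => ?_
        show M3.mulVec (M3.mulVec (M3.mulVec x)) = x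
        rw [Matrix.mulVec_mulVec, Matrix.mulVec_mulVec, hM3sq, hP32M3, Matrix.one_mulVec]
      · intro h
        have h0 : g ![1,0,0,0,0,0,0,0] = ![1,0,0,0,0,0,0,0] := DFunLike.congr_fun h _
        rw [gOf_apply] at h0
        have h2 := congrFun h0 0
        norm_num [Matrix.mulVec, dotProduct, Fin.sum_univ_succ, M3] at h2
    · exact fixed_zero M3 K3 hK3 x hfix
  · -- p = 5
    haveI : Fact (Nat.Prime 5) := ⟨by norm_num⟩
    have hM5N5 : M5 * N5 = 1 := mul_eq_one_comm.mpr hN5M5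
    set g := gOf M5 N5 hM5N5 hN5M5 with hg
    have hfwd : ∀ k : Fin 9, g.toLinearMap (gvec k) ∈ E8set := by
      intro k
      fin_cases k
      · exact mem_M5_g0
      · exact mem_M5_g1
      · exact mem_M5_g2
      · exact mem_M5_g3
      · exact mem_M5_g4
      · exact mem_M5_g5
      · exact mem_M5_g6
      · exact mem_M5_g7
      · exact mem_M5_g8
    have hbwd : ∀ k : Fin 9, g.symm.toLinearMap (gvec k) ∈ E8set := by
      intro k
      fin_cases k
      · exact mem_N5_g0
      · exact mem_N5_g1
      · exact mem_N5_g2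
      · exact mem_N5_g3
      · exact mem_N5_g4
      · exact mem_N5_g5
      · exact mem_N5_g6
      · exact mem_N5_g7
      · exact mem_N5_g8
    refine ⟨g, fun x => ?_, fun x y => ?_, ?_, fun x _ hfix => ?_⟩
    · constructor
      · intro hx
        exact preserve_mem g.toLinearMap hfwd x hx
      · intro hx
        have h3 := preserve_mem g.symm.toLinearMap hbwd _ hx
        simpa using h3
    · exact B8_pres M5 N5 hT5 hN5M5 x y
    · refine orderOf_eq_prime ?_ ?_
      · refine LinearEquiv.ext fun x => ?_
        show M5.mulVec (M5.mulVec (M5.mulVec (M5.mulVec (M5.mulVec x)))) = x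
        rw [Matrix.mulVec_mulVec, Matrix.mulVec_mulVec, Matrix.mulVec_mulVec,
          Matrix.mulVec_mulVec, hM5sq, hP52M5, hP53M5, hP54M5, Matrix.one_mulVec]
      · intro h
        have h0 : g ![1,0,0,0,0,0,0,0] = ![1,0,0,0,0,0,0,0] := DFunLike.congr_fun h _
        rw [gOf_apply] at h0
        have h2 := congrFun h0 0
        norm_num [Matrix.mulVec, dotProduct, Fin.sum_univ_succ, M5] at h2
    · exact fixed_zero M5 K5 hK5 x hfix
end

section
/- In the lattice K = K_p the following hold. (a) The orthogonal complement of i(N) in K, namely {y ∈ K : B(y, i(x)) = 0 for all x ∈ N}, equals ℤ·(s+f) + ℤ·f; the vectors s+f and f satisfy B(s+f, s+f) = 0, B(f,f) = 0 and B(s+f, f) = 1, so this complement is a hyperbolic plane U and K is the orthogonal direct sum of i(N) and this copy of U. (b) The lattice L is contained in K, and the orthogonal complement of L in K, namely {y ∈ K : B(y, x) = 0 for all x ∈ L}, equals ℤ·e' + ℤ·f where e' := p·s + ϱ + f; the vectors e' and f satisfy B(e', e') = 0, B(f, f) = 0 and B(e', f) = p, so this complement is a copy of U(p) (Gram matrix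 [[0,p],[p,0]]). -/
open scoped BigOperators

namespace Nikulin

noncomputable section

/-- Index set for the basis vectors `D_{i,j}`, `1 ≤ i ≤ ν`, `1 ≤ j ≤ p−1`. -/
abbrev Idx (p ν : ℕ) := Fin ν × Fin (p - 1)

variable (p ν : ℕ)

/-- The Gram matrix of the form `B` on the basis `D_{i,j}`:
`B(D_{i,j}, D_{i,j}) = −2`, `B(D_{i,j}, D_{i,j±1}) = 1`, all other entries `0`. -/
def gram (a b : Idx p ν) : ℚ :=
  if a.1 = b.1 then
    if a.2 = b.2 then -2
    else if a.2.1 + 1 = b.2.1 ∨ b.2.1 + 1 = a.2.1 then 1 else 0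
  else 0

/-- The symmetric bilinear form `B` on `V`, the bilinear extension of the Gram matrix. -/
def Bf : (Idx p ν → ℚ) →ₗ[ℚ] (Idx p ν → ℚ) →ₗ[ℚ] ℚ :=
  LinearMap.mk₂ ℚ (fun x y => ∑ a : Idx p ν, ∑ b : Idx p ν, x a * gram p ν a b * y b)
    (by
      intro x x' y
      rw [← Finset.sum_add_distrib]
      refine Finset.sum_congr rfl fun a _ => ?_
      rw [← Finset.sum_add_distrib]
      refine Finset.sum_congr rfl fun b _ => ?_
      simp only [Pi.add_apply]; ring)
    (by
      intro c x y
      rw [Finset.smul_sum]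
      refine Finset.sum_congr rfl fun a _ => ?_
      rw [Finset.smul_sum]
      refine Finset.sum_congr rfl fun b _ => ?_
      simp only [Pi.smul_apply, smul_eq_mul]; ring)
    (by
      intro x y y'
      rw [← Finset.sum_add_distrib]
      refine Finset.sum_congr rfl fun a _ => ?_
      rw [← Finset.sum_add_distrib]
      refine Finset.sum_congr rfl fun b _ => ?_
      simp only [Pi.add_apply]; ring)
    (by
      intro c x y
      rw [Finset.smul_sum]
      refine Finset.sum_congr rfl fun a _ => ?_
      rw [Finset.smul_sum]
      refine Finset.sum_congr rfl fun b _ => ?_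
      simp only [Pi.smul_apply, smul_eq_mul]; ring)

/-- The basis vector `D_{i,j}` (the index `q = (i, j)` with `j ∈ Fin (p−1)` representing
`j+1 ∈ {1, …, p−1}`). -/
def Dv (q : Idx p ν) : Idx p ν → ℚ := Pi.single q 1

variable (k : Fin ν → ℤ)

/-- The vector `ϖ = Σ_i (k_i/p) Σ_j j·D_{i,j}`. -/
def varpi : Idx p ν → ℚ := fun q => (k q.1 : ℚ) * ((q.2.1 : ℚ) + 1) / p

/-- The Nikulin lattice `N_p`, generated by the `D_{i,j}` together with `ϖ`. -/
def NL : AddSubgroup (Idx p ν → ℚ) :=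
  AddSubgroup.closure (Set.range (Dv p ν) ∪ {varpi p ν k})

/-- The Weyl vector `ϱ = −(1/2) Σ_i Σ_j j(p−j)·D_{i,j}`. -/
def rho : Idx p ν → ℚ :=
  fun q => -(((q.2.1 : ℚ) + 1) * ((p : ℚ) - ((q.2.1 : ℚ) + 1)) / 2)

/-- The lattice `L_p = {x ∈ N_p : B(ϱ, x) ∈ pℤ}`. -/
def LL : AddSubgroup (Idx p ν → ℚ) where
  carrier := {x | x ∈ NL p ν k ∧ ∃ m : ℤ, Bf p ν (rho p ν) x = (p : ℚ) * m}
  zero_mem' := ⟨(NL p ν k).zero_mem, 0, by simp⟩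
  add_mem' := by
    rintro a b ⟨haN, ma, hma⟩ ⟨hbN, mb, hmb⟩
    exact ⟨add_mem haN hbN, ma + mb, by rw [map_add, hma, hmb]; push_cast; ring⟩
  neg_mem' := by
    rintro a ⟨haN, ma, hma⟩
    exact ⟨neg_mem haN, -ma, by rw [map_neg, hma]; push_cast; ring⟩

/-- The dual lattice `S^∨ = {y ∈ V : B(y, s) ∈ ℤ for all s ∈ S}`. -/
def dual (S : AddSubgroup (Idx p ν → ℚ)) : AddSubgroup (Idx p ν → ℚ) where
  carrier := {y | ∀ s ∈ S, ∃ m : ℤ, Bf p ν y s = (m : ℚ)}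
  zero_mem' := by
    intro s hs
    exact ⟨0, by simp⟩
  add_mem' := by
    rintro a b ha hb s hs
    obtain ⟨ma, hma⟩ := ha s hs
    obtain ⟨mb, hmb⟩ := hb s hs
    exact ⟨ma + mb, by rw [map_add, LinearMap.add_apply, hma, hmb]; push_cast; ring⟩
  neg_mem' := by
    rintro a ha s hs
    obtain ⟨m, hm⟩ := ha s hs
    exact ⟨-m, by rw [map_neg, LinearMap.neg_apply, hm]; push_cast; ring⟩

/-- The list of admissible data `(p, ν, k)`:
`(2, 8, (1,…,1))`, `(3, 6, (1,…,1))`, `(5, 4, (1,1,2,2))`, `(7, 3, (1,2,3))`. -/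
def goodCase : Prop :=
  (p = 2 ∧ ∃ h : ν = 8, ∀ i, k i = ![1, 1, 1, 1, 1, 1, 1, 1] (Fin.cast h i)) ∨
  (p = 3 ∧ ∃ h : ν = 6, ∀ i, k i = ![1, 1, 1, 1, 1, 1] (Fin.cast h i)) ∨
  (p = 5 ∧ ∃ h : ν = 4, ∀ i, k i = ![1, 1, 2, 2] (Fin.cast h i)) ∨
  (p = 7 ∧ ∃ h : ν = 3, ∀ i, k i = ![1, 2, 3] (Fin.cast h i))

end

end Nikulin
namespace Nikulin

noncomputable section
variable (p ν : ℕ) (k : Fin ν → ℤ)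

/-- `W = V ⊕ ℚf ⊕ ℚs`. -/
abbrev Wt := (Idx p ν → ℚ) × ℚ × ℚ

/-- The bilinear extension of `B` to `W = V ⊕ ℚf ⊕ ℚs` determined by `B(f, V) = 0`,
`B(f,f) = 0`, `B(s,f) = 1`, `B(s,s) = −2` and `B(s, x) = −(1/p)·B(ϱ, x)` for `x ∈ V`. -/
def BW : Wt p ν →ₗ[ℚ] Wt p ν →ₗ[ℚ] ℚ :=
  LinearMap.mk₂ ℚ
    (fun u v => Bf p ν u.1 v.1 - (u.2.2 / p) * Bf p ν (rho p ν) v.1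
      - (v.2.2 / p) * Bf p ν (rho p ν) u.1 + u.2.1 * v.2.2 + v.2.1 * u.2.2
      - 2 * u.2.2 * v.2.2)
    (by
      intro u u' v
      simp only [Prod.fst_add, Prod.snd_add, map_add, LinearMap.add_apply]
      ring)
    (by
      intro c u v
      simp only [Prod.smul_fst, Prod.smul_snd, map_smul, LinearMap.smul_apply, smul_eq_mul]
      ring)
    (by
      intro u v v'
      simp only [Prod.fst_add, Prod.snd_add, map_add, LinearMap.add_apply]
      ring)
    (by
      intro c u v
      simp only [Prod.smul_fst, Prod.smul_snd, map_smul, LinearMap.smul_apply, smul_eq_mul]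
      ring)

/-- The vector `f ∈ W`. -/
def fvec : Wt p ν := (0, 1, 0)

/-- The vector `s ∈ W`. -/
def svec : Wt p ν := (0, 0, 1)

/-- The embedding `i : V → W`, `i(x) = x + (1/p)·B(ϱ,x)·f`. -/
def iMap (x : Idx p ν → ℚ) : Wt p ν := (x, (1 / p) * Bf p ν (rho p ν) x, 0)

/-- The inclusion `V ⊆ W`. -/
def inclV (x : Idx p ν → ℚ) : Wt p ν := (x, 0, 0)

/-- The lattice `K = K_p = i(N) + ℤf + ℤs ⊆ W`. -/
def KL : AddSubgroup (Wt p ν) :=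
  AddSubgroup.closure ((iMap p ν '' (NL p ν k : Set (Idx p ν → ℚ))) ∪ {fvec p ν, svec p ν})

/-- The isotropic vector `e' = p·s + ϱ + f`. -/
def evec : Wt p ν := (p : ℚ) • svec p ν + inclV p ν (rho p ν) + fvec p ν

end

end Nikulin

open Nikulin

namespace Nikulin
variable (p ν : ℕ)

lemma gram_comm (a b : Idx p ν) : gram p ν a b = gram p ν b a := by
  unfold gram
  split_ifs <;> simp_all

lemma Bf_apply (x y : Idx p ν → ℚ) :
    Bf p ν x y = ∑ a : Idx p ν, ∑ b : Idx p ν, x a * gram p ν a b * y b := rfl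

lemma Bf_comm (x y : Idx p ν → ℚ) : Bf p ν x y = Bf p ν y x := by
  rw [Bf_apply, Bf_apply, Finset.sum_comm]
  refine Finset.sum_congr rfl fun b _ => Finset.sum_congr rfl fun a _ => ?_
  rw [gram_comm]; ring

lemma Bf_single_right (x : Idx p ν → ℚ) (q : Idx p ν) :
    Bf p ν x (Dv p ν q) = ∑ a : Idx p ν, x a * gram p ν a q := by
  rw [Bf_apply]
  refine Finset.sum_congr rfl fun a _ => ?_
  simp [Dv, Pi.single_apply, mul_ite, Finset.sum_ite_eq']

end Nikulin

namespace Nikulin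
variable (p ν : ℕ) (k : Fin ν → ℤ)

lemma Dv_mem : ∀ q, Dv p ν q ∈ NL p ν k := fun q =>
  AddSubgroup.subset_closure (Or.inl ⟨q, rfl⟩)

lemma varpi_mem : varpi p ν k ∈ NL p ν k :=
  AddSubgroup.subset_closure (Or.inr rfl)

lemma mem_NL_of (c : Idx p ν → ℤ) (m : ℤ)
    (x : Idx p ν → ℚ) (hx : x = fun q => (c q : ℚ) + (m : ℚ) * varpi p ν k q) :
    x ∈ NL p ν k := by
  have h : x = (∑ q : Idx p ν, c q • Dv p ν q) + m • varpi p ν k := by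
    funext a
    rw [hx]
    simp only [Pi.add_apply, Finset.sum_apply, Pi.smul_apply, zsmul_eq_mul]
    congr 1
    simp [Dv, Pi.single_apply, mul_ite, Finset.sum_ite_eq']
  rw [h]
  exact add_mem (sum_mem fun q _ => zsmul_mem (Dv_mem p ν k q) _)
    (zsmul_mem (varpi_mem p ν k) _)

lemma NL_repr {x : Idx p ν → ℚ} (hx : x ∈ NL p ν k) :
    ∃ (c : Idx p ν → ℤ) (m : ℤ), x = fun q => (c q : ℚ) + (m : ℚ) * varpi p ν k q := by
  induction hx using AddSubgroup.closure_induction with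
  | mem y hy =>
    rcases hy with ⟨q, rfl⟩ | rfl
    · exact ⟨fun a => if a = q then 1 else 0, 0, by
        funext a; simp [Dv, Pi.single_apply, apply_ite (fun z : ℤ => (z : ℚ)), eq_comm]⟩
    · exact ⟨0, 1, by funext a; simp⟩
  | zero => exact ⟨0, 0, by funext a; simp⟩
  | add y z _ _ hy hz =>
    obtain ⟨c1, m1, rfl⟩ := hy
    obtain ⟨c2, m2, rfl⟩ := hz
    exact ⟨c1 + c2, m1 + m2, by funext a; push_cast; simp; ring⟩
  | neg y _ hy =>
    obtain ⟨c, m, rfl⟩ := hy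
    exact ⟨-c, -m, by funext a; push_cast; simp; ring⟩

end Nikulin

namespace Nikulin
variable (p ν : ℕ) (k : Fin ν → ℤ)

lemma iMap_add (x y : Idx p ν → ℚ) : iMap p ν (x + y) = iMap p ν x + iMap p ν y := by
  simp [iMap, Prod.ext_iff, map_add]; ring

lemma iMap_zero : iMap p ν 0 = 0 := by
  simp [iMap, Prod.ext_iff]

lemma iMap_neg (x : Idx p ν → ℚ) : iMap p ν (-x) = -iMap p ν x := by
  simp [iMap, Prod.ext_iff]

lemma iMap_mem {x : Idx p ν → ℚ} (hx : x ∈ NL p ν k) : iMap p ν x ∈ KL p ν k :=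
  AddSubgroup.subset_closure (Or.inl ⟨x, hx, rfl⟩)

lemma fvec_mem : fvec p ν ∈ KL p ν k :=
  AddSubgroup.subset_closure (Or.inr (Or.inl rfl))

lemma svec_mem : svec p ν ∈ KL p ν k :=
  AddSubgroup.subset_closure (Or.inr (Or.inr rfl))

lemma mem_KL_of {x : Idx p ν → ℚ} (hx : x ∈ NL p ν k) (a b : ℤ) :
    iMap p ν x + (a : ℚ) • svec p ν + (b : ℚ) • fvec p ν ∈ KL p ν k := by
  rw [Int.cast_smul_eq_zsmul, Int.cast_smul_eq_zsmul]
  exact add_mem (add_mem (iMap_mem p ν k hx) (zsmul_mem (svec_mem p ν k) a))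
    (zsmul_mem (fvec_mem p ν k) b)

lemma KL_repr {y : Wt p ν} (hy : y ∈ KL p ν k) :
    ∃ x ∈ NL p ν k, ∃ a b : ℤ,
      y = iMap p ν x + (a : ℚ) • svec p ν + (b : ℚ) • fvec p ν := by
  induction hy using AddSubgroup.closure_induction with
  | mem z hz =>
    rcases hz with ⟨x, hx, rfl⟩ | rfl | rfl
    · exact ⟨x, hx, 0, 0, by simp⟩
    · exact ⟨0, zero_mem _, 0, 1, by simp [iMap_zero]⟩
    · exact ⟨0, zero_mem _, 1, 0, by simp [iMap_zero]⟩
  | zero => exact ⟨0, zero_mem _, 0, 0, by simp [iMap_zero]⟩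
  | add u v _ _ hu hv =>
    obtain ⟨x1, hx1, a1, b1, rfl⟩ := hu
    obtain ⟨x2, hx2, a2, b2, rfl⟩ := hv
    exact ⟨x1 + x2, add_mem hx1 hx2, a1 + a2, b1 + b2, by
      rw [iMap_add]; push_cast; module⟩
  | neg u _ hu =>
    obtain ⟨x, hx, a, b, rfl⟩ := hu
    exact ⟨-x, neg_mem hx, -a, -b, by rw [iMap_neg]; push_cast; module⟩

end Nikulin

namespace Nikulin
variable (p ν : ℕ)

lemma gram_ne (a q : Idx p ν) (h : a.1 ≠ q.1) : gram p ν a q = 0 := by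
  unfold gram; rw [if_neg h]

lemma sum_gram_fiber (x : Idx p ν → ℚ) (q : Idx p ν) :
    ∑ a : Idx p ν, x a * gram p ν a q = ∑ j : Fin (p-1), x (q.1, j) * gram p ν (q.1, j) q := by
  rw [Fintype.sum_prod_type, Finset.sum_comm]
  refine Finset.sum_congr rfl fun j _ => ?_
  have h : ∀ i : Fin ν, x (i, j) * gram p ν (i, j) q
      = if i = q.1 then x (q.1, j) * gram p ν (q.1, j) q else 0 := by
    intro i
    by_cases hi : i = q.1
    · subst hi; rw [if_pos rfl]
    · rw [if_neg hi, gram_ne p ν _ _ hi, mul_zero]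
  rw [Finset.sum_congr rfl fun i _ => h i, Finset.sum_ite_eq' Finset.univ q.1]
  simp

lemma Bf_Dv_fiber (x : Idx p ν → ℚ) (q : Idx p ν) :
    Bf p ν x (Dv p ν q) = ∑ j : Fin (p-1), x (q.1, j) * gram p ν (q.1, j) q := by
  rw [Bf_single_right, sum_gram_fiber]

end Nikulin

namespace Nikulin
variable (p ν : ℕ) (k : Fin ν → ℤ)

/-- Integer version of the Gram matrix. -/
def gramZ (a b : Idx p ν) : ℤ :=
  if a.1 = b.1 then
    if a.2 = b.2 then -2
    else if a.2.1 + 1 = b.2.1 ∨ b.2.1 + 1 = a.2.1 then 1 else 0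
  else 0

lemma gram_eq_gramZ (a b : Idx p ν) : gram p ν a b = ((gramZ p ν a b : ℤ) : ℚ) := by
  unfold gram gramZ; split_ifs <;> norm_num

lemma evec_eq : evec p ν = (rho p ν, 1, (p:ℚ)) := by
  simp [evec, svec, fvec, inclV, Prod.ext_iff]

lemma BW_apply (u v : Wt p ν) :
    BW p ν u v = Bf p ν u.1 v.1 - (u.2.2 / p) * Bf p ν (rho p ν) v.1
      - (v.2.2 / p) * Bf p ν (rho p ν) u.1 + u.2.1 * v.2.2 + v.2.1 * u.2.2
      - 2 * u.2.2 * v.2.2 := rfl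

lemma BW_fvec_iMap (z : Idx p ν → ℚ) : BW p ν (fvec p ν) (iMap p ν z) = 0 := by
  simp [BW_apply, fvec, iMap]

lemma BW_svec_iMap (z : Idx p ν → ℚ) : BW p ν (svec p ν) (iMap p ν z) = 0 := by
  simp [BW_apply, svec, iMap]

lemma BW_iMap_iMap (x z : Idx p ν → ℚ) :
    BW p ν (iMap p ν x) (iMap p ν z) = Bf p ν x z := by
  simp [BW_apply, iMap]

lemma BW_iMap_fvec (x : Idx p ν → ℚ) : BW p ν (iMap p ν x) (fvec p ν) = 0 := by
  simp [BW_apply, fvec, iMap]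

lemma BW_iMap_sf (x : Idx p ν → ℚ) :
    BW p ν (iMap p ν x) (svec p ν + fvec p ν) = 0 := by
  simp [BW_apply, fvec, svec, iMap]

lemma BW_fvec_inclV (z : Idx p ν → ℚ) : BW p ν (fvec p ν) (inclV p ν z) = 0 := by
  simp [BW_apply, fvec, inclV]

lemma BW_svec_inclV (z : Idx p ν → ℚ) :
    BW p ν (svec p ν) (inclV p ν z) = -(1/p) * Bf p ν (rho p ν) z := by
  simp [BW_apply, svec, inclV]

lemma BW_iMap_inclV (x z : Idx p ν → ℚ) :
    BW p ν (iMap p ν x) (inclV p ν z) = Bf p ν x z := by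
  simp [BW_apply, iMap, inclV]

lemma BW_evec_inclV (hp : (p:ℚ) ≠ 0) (z : Idx p ν → ℚ) :
    BW p ν (evec p ν) (inclV p ν z) = 0 := by
  rw [evec_eq, BW_apply]
  simp [inclV]
  field_simp
  ring

end Nikulin

namespace Nikulin

lemma master (p ν : ℕ) (k : Fin ν → ℤ)
    (hp : (p:ℚ) ≠ 0)
    (hne : Nonempty (Idx p ν))
    (hrhoD : ∀ q, Bf p ν (rho p ν) (Dv p ν q) = 1)
    (hrhoN : rho p ν ∈ NL p ν k)
    (hrr : Bf p ν (rho p ν) (rho p ν) = -2 * (p:ℚ) * ((p:ℚ) - 1))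
    (hvpD : ∀ q, ∃ m : ℤ, Bf p ν (varpi p ν k) (Dv p ν q) = m)
    (hnd : ∀ x : Idx p ν → ℚ, (∀ q, Bf p ν x (Dv p ν q) = 0) → x = 0) :
    (∀ y : Wt p ν,
      (y ∈ KL p ν k ∧ ∀ x ∈ NL p ν k, BW p ν y (iMap p ν x) = 0) ↔
        ∃ a b : ℤ, y = (a : ℚ) • (svec p ν + fvec p ν) + (b : ℚ) • fvec p ν) ∧
    BW p ν (svec p ν + fvec p ν) (svec p ν + fvec p ν) = 0 ∧
    BW p ν (fvec p ν) (fvec p ν) = 0 ∧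
    BW p ν (svec p ν + fvec p ν) (fvec p ν) = 1 ∧
    (∀ y ∈ KL p ν k, ∃ x ∈ NL p ν k, ∃ a b : ℤ,
      y = iMap p ν x + (a : ℚ) • (svec p ν + fvec p ν) + (b : ℚ) • fvec p ν) ∧
    (∀ x ∈ NL p ν k, BW p ν (iMap p ν x) (fvec p ν) = 0 ∧
      BW p ν (iMap p ν x) (svec p ν + fvec p ν) = 0) ∧
    (∀ x ∈ LL p ν k, inclV p ν x ∈ KL p ν k) ∧
    (∀ y : Wt p ν,
      (y ∈ KL p ν k ∧ ∀ x ∈ LL p ν k, BW p ν y (inclV p ν x) = 0) ↔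
        ∃ a b : ℤ, y = (a : ℚ) • evec p ν + (b : ℚ) • fvec p ν) ∧
    BW p ν (evec p ν) (evec p ν) = 0 ∧
    BW p ν (evec p ν) (fvec p ν) = (p : ℚ) := by
  -- B(x, D_q) is an integer for x ∈ N
  have hBfInt : ∀ x ∈ NL p ν k, ∀ q, ∃ n : ℤ, Bf p ν x (Dv p ν q) = n := by
    intro x hx q
    obtain ⟨c, m, rfl⟩ := NL_repr p ν k hx
    obtain ⟨n0, hn0⟩ := hvpD q
    refine ⟨(∑ a : Idx p ν, c a * gramZ p ν a q) + m * n0, ?_⟩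
    rw [Bf_single_right]
    have h1 : ∀ a : Idx p ν, ((c a : ℚ) + (m:ℚ) * varpi p ν k a) * gram p ν a q
        = (c a : ℚ) * gram p ν a q + (m:ℚ) * (varpi p ν k a * gram p ν a q) := fun a => by ring
    rw [Finset.sum_congr rfl fun a _ => h1 a, Finset.sum_add_distrib, ← Finset.mul_sum]
    have hn0' : ∑ a : Idx p ν, varpi p ν k a * gram p ν a q = (n0:ℚ) := by
      rw [← Bf_single_right]; exact hn0
    have h2 : ∑ a : Idx p ν, (c a : ℚ) * gram p ν a q
        = ((∑ a : Idx p ν, c a * gramZ p ν a q : ℤ) : ℚ) := by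
      push_cast
      exact Finset.sum_congr rfl fun a _ => by rw [gram_eq_gramZ]
    rw [hn0', h2]; push_cast; ring
  -- p·D_q lies in L
  have hpD_L : ∀ q, ((p:ℚ) • Dv p ν q) ∈ LL p ν k := by
    intro q
    constructor
    · rw [show ((p:ℚ)) = (((p:ℤ)):ℚ) by push_cast; ring, Int.cast_smul_eq_zsmul]
      exact zsmul_mem (Dv_mem p ν k q) _
    · exact ⟨1, by rw [map_smul, smul_eq_mul, hrhoD q]; push_cast; ring⟩
  -- e' ∈ K
  have hevec_mem : evec p ν ∈ KL p ν k := by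
    have h : evec p ν = iMap p ν (rho p ν) + (((p:ℤ)):ℚ) • svec p ν
        + (((2*(p:ℤ)-1 : ℤ)):ℚ) • fvec p ν := by
      rw [evec_eq]
      simp only [iMap, svec, fvec, Prod.ext_iff, Prod.smul_mk, Prod.mk_add_mk, smul_eq_mul,
        smul_zero, Prod.fst_add, Prod.snd_add, hrr]
      refine ⟨by funext a; simp, ?_, ?_⟩ <;> push_cast <;> field_simp <;> ring
    rw [h]; exact mem_KL_of p ν k hrhoN _ _
  refine ⟨?_, ?_, ?_, ?_, ?_, ?_, ?_, ?_, ?_, ?_⟩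
  -- (1) complement of i(N)
  · intro y
    constructor
    · rintro ⟨hyK, hperp⟩
      obtain ⟨x, hx, a, b, rfl⟩ := KL_repr p ν k hyK
      have hx0 : x = 0 := by
        refine hnd x fun q => ?_
        have h := hperp (Dv p ν q) (Dv_mem p ν k q)
        rw [map_add, map_add, LinearMap.add_apply, LinearMap.add_apply, map_smul, map_smul,
          LinearMap.smul_apply, LinearMap.smul_apply, BW_iMap_iMap, BW_svec_iMap,
          BW_fvec_iMap] at h
        simpa using h
      refine ⟨a, b - a, ?_⟩
      rw [hx0, iMap_zero]
      push_cast
      module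
    · rintro ⟨a, b, rfl⟩
      constructor
      · have h : (a : ℚ) • (svec p ν + fvec p ν) + (b : ℚ) • fvec p ν
            = iMap p ν 0 + (a : ℚ) • svec p ν + (((a+b : ℤ)):ℚ) • fvec p ν := by
          rw [iMap_zero]; push_cast; module
        rw [h]; exact mem_KL_of p ν k (zero_mem _) a (a+b)
      · intro x hx
        simp only [map_add, map_smul, LinearMap.add_apply, LinearMap.smul_apply,
          smul_eq_mul, BW_svec_iMap, BW_fvec_iMap]
        ring
  -- (2)-(4) values on U
  · rw [BW_apply]; simp [svec, fvec]; ring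
  · rw [BW_apply]; simp [fvec]
  · rw [BW_apply]; simp [svec, fvec]
  -- (5) K = i(N) + U
  · intro y hy
    obtain ⟨x, hx, a, b, rfl⟩ := KL_repr p ν k hy
    exact ⟨x, hx, a, b - a, by push_cast; module⟩
  -- (6) i(N) ⟂ U
  · intro x _
    exact ⟨BW_iMap_fvec p ν x, BW_iMap_sf p ν x⟩
  -- (7) L ⊆ K
  · rintro x ⟨hxN, m, hm⟩
    have h : inclV p ν x = iMap p ν x + ((0:ℤ):ℚ) • svec p ν + ((-m:ℤ):ℚ) • fvec p ν := by
      simp only [iMap, svec, fvec, inclV, Prod.ext_iff, Prod.smul_mk, Prod.mk_add_mk,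
        smul_eq_mul, smul_zero, hm]
      refine ⟨by funext a; simp, ?_, ?_⟩ <;> push_cast <;> field_simp <;> ring
    rw [h]; exact mem_KL_of p ν k hxN 0 (-m)
  -- (8) complement of L
  · intro y
    constructor
    · rintro ⟨hyK, hperp⟩
      obtain ⟨x, hx, a, b, rfl⟩ := KL_repr p ν k hyK
      have key : ∀ q, Bf p ν x (Dv p ν q) = (a : ℚ) / p := by
        intro q
        have h := hperp _ (hpD_L q)
        rw [map_add, map_add, LinearMap.add_apply, LinearMap.add_apply, map_smul, map_smul,
          LinearMap.smul_apply, LinearMap.smul_apply, BW_fvec_inclV, BW_svec_inclV,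
          BW_iMap_inclV, map_smul, map_smul, smul_eq_mul, smul_eq_mul, hrhoD q] at h
        field_simp at h
        simp only [smul_eq_mul, nsmul_eq_mul, mul_one, mul_zero, add_zero, smul_zero] at h
        rw [eq_div_iff hp]
        have h3 : (p:ℚ) * ((p:ℚ) * Bf p ν x (Dv p ν q) - a) = 0 := by linarith
        rcases mul_eq_zero.mp h3 with h4 | h4
        · exact absurd h4 hp
        · linarith
      obtain ⟨q0⟩ := hne
      obtain ⟨n, hn⟩ := hBfInt x hx q0
      have ha : (a : ℚ) = (p : ℚ) * n := by
        have := key q0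
        rw [hn] at this
        field_simp at this
        linarith
      have hx2 : x = (n:ℚ) • rho p ν := by
        have h0 : x - (n:ℚ) • rho p ν = 0 := by
          refine hnd _ fun q => ?_
          rw [map_sub, LinearMap.sub_apply, map_smul, LinearMap.smul_apply, smul_eq_mul,
            hrhoD q, key q, ha]
          field_simp
          ring
        exact sub_eq_zero.mp h0
      refine ⟨n, b - n - 2*n*((p:ℤ)-1), ?_⟩
      rw [hx2, evec_eq]
      have hiM : iMap p ν ((n:ℚ) • rho p ν)
          = ((n:ℚ) • rho p ν, (n:ℚ) * (-2*((p:ℚ)-1)), 0) := by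
        simp only [iMap, map_smul, smul_eq_mul, hrr, Prod.mk.injEq]
        refine ⟨trivial, ?_, trivial⟩
        field_simp
      rw [hiM]
      simp only [svec, fvec, Prod.smul_mk, Prod.mk_add_mk, smul_eq_mul, smul_zero,
        Prod.ext_iff]
      refine ⟨by funext w; simp, ?_, by push_cast [ha]; ring⟩
      push_cast; ring
    · rintro ⟨a, b, rfl⟩
      constructor
      · rw [Int.cast_smul_eq_zsmul, Int.cast_smul_eq_zsmul]
        exact add_mem (zsmul_mem hevec_mem a) (zsmul_mem (fvec_mem p ν k) b)
      · intro x _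
        rw [map_add, LinearMap.add_apply, map_smul, map_smul, LinearMap.smul_apply,
          LinearMap.smul_apply, BW_fvec_inclV, BW_evec_inclV p ν hp]
        simp
  -- (9) B(e',e') = 0
  · rw [evec_eq, BW_apply]
    simp only [hrr]
    field_simp; ring
  -- (10) B(e',f) = p
  · rw [evec_eq, BW_apply]
    simp [fvec]

end Nikulin

namespace Nikulin

lemma Bf_rho_rho (p ν : ℕ) (hrhoD : ∀ q, Bf p ν (rho p ν) (Dv p ν q) = 1) :
    Bf p ν (rho p ν) (rho p ν) = ∑ b : Idx p ν, rho p ν b := by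
  rw [Bf_apply, Finset.sum_comm]
  refine Finset.sum_congr rfl fun b _ => ?_
  have h := hrhoD b
  rw [Bf_single_right] at h
  calc ∑ a : Idx p ν, rho p ν a * gram p ν a b * rho p ν b
      = (∑ a : Idx p ν, rho p ν a * gram p ν a b) * rho p ν b := by
        rw [Finset.sum_mul]
    _ = rho p ν b := by rw [h, one_mul]

end Nikulin


set_option maxHeartbeats 1000000 in
/-- In `K = K_p`: the orthogonal complement of `i(N)` is the hyperbolic plane `ℤ(s+f) + ℤf`, `K = i(N) ⊥ U`, `L ⊆ K`, and the orthogonal complement of `L` in `K` is `ℤe′ + ℤf ≅ U(p)`. -/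
theorem Kp_orthogonal_decompositions (p ν : ℕ) (k : Fin ν → ℤ) (hk : goodCase p ν k) :
    -- (a) orthogonal complement of i(N) in K is ℤ(s+f) + ℤf
    (∀ y : Wt p ν,
      (y ∈ KL p ν k ∧ ∀ x ∈ NL p ν k, BW p ν y (iMap p ν x) = 0) ↔
        ∃ a b : ℤ, y = (a : ℚ) • (svec p ν + fvec p ν) + (b : ℚ) • fvec p ν) ∧
    BW p ν (svec p ν + fvec p ν) (svec p ν + fvec p ν) = 0 ∧
    BW p ν (fvec p ν) (fvec p ν) = 0 ∧
    BW p ν (svec p ν + fvec p ν) (fvec p ν) = 1 ∧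
    (∀ y ∈ KL p ν k, ∃ x ∈ NL p ν k, ∃ a b : ℤ,
      y = iMap p ν x + (a : ℚ) • (svec p ν + fvec p ν) + (b : ℚ) • fvec p ν) ∧
    (∀ x ∈ NL p ν k, BW p ν (iMap p ν x) (fvec p ν) = 0 ∧
      BW p ν (iMap p ν x) (svec p ν + fvec p ν) = 0) ∧
    -- (b) L ⊆ K and the orthogonal complement of L in K is ℤe' + ℤf ≅ U(p)
    (∀ x ∈ LL p ν k, inclV p ν x ∈ KL p ν k) ∧
    (∀ y : Wt p ν,
      (y ∈ KL p ν k ∧ ∀ x ∈ LL p ν k, BW p ν y (inclV p ν x) = 0) ↔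
        ∃ a b : ℤ, y = (a : ℚ) • evec p ν + (b : ℚ) • fvec p ν) ∧
    BW p ν (evec p ν) (evec p ν) = 0 ∧
    BW p ν (evec p ν) (fvec p ν) = (p : ℚ) := by
  obtain ⟨hp, h, hk'⟩ | ⟨hp, h, hk'⟩ | ⟨hp, h, hk'⟩ | ⟨hp, h, hk'⟩ := hk <;> subst hp <;> subst h
  · -- p = 2, ν = 8
    have hrhoD : ∀ q, Bf 2 8 (rho 2 8) (Dv 2 8 q) = 1 := by
      intro q
      obtain ⟨i, j⟩ := q
      rw [Bf_Dv_fiber]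
      fin_cases j <;>
        norm_num [Fin.sum_univ_succ, Fin.val_succ, Fin.val_zero, Fin.ext_iff, gram, rho, varpi]
    have hrhoN : rho 2 8 ∈ NL 2 8 k := by
      have hk1 : ∀ i, k i = 1 := by intro i; fin_cases i <;> rw [hk'] <;> decide
      refine mem_NL_of 2 8 k 0 (-1) _ ?_
      funext a
      have h2 : (a.2 : ℕ) = 0 := by omega
      simp [rho, varpi, hk1 a.1, h2]
      norm_num
    have hrr : Bf 2 8 (rho 2 8) (rho 2 8) = -2 * ((2:ℕ):ℚ) * (((2:ℕ):ℚ) - 1) := by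
      rw [Bf_rho_rho 2 8 hrhoD, Fintype.sum_prod_type]
      norm_num [Fin.sum_univ_succ, Fin.val_succ, Fin.val_zero, rho]
    have hvpD : ∀ q, ∃ m : ℤ, Bf 2 8 (varpi 2 8 k) (Dv 2 8 q) = m := by
      intro q
      obtain ⟨i, j⟩ := q
      rw [Bf_Dv_fiber]
      fin_cases j <;> [exact ⟨-k i, by norm_num [Fin.sum_univ_succ, Fin.val_succ, Fin.val_zero, Fin.ext_iff, gram, rho, varpi] <;> push_cast <;> ring⟩]
    have hnd : ∀ x : Idx 2 8 → ℚ, (∀ q, Bf 2 8 x (Dv 2 8 q) = 0) → x = 0 := by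
      intro x hx
      funext q
      rw [Pi.zero_apply]
      obtain ⟨i, j⟩ := q
      have E : ∀ j' : Fin 1, ∑ j'' : Fin 1, x (i, j'') * gram 2 8 (i, j'') (i, j') = 0 :=
        fun j' => (Bf_Dv_fiber 2 8 x (i, j')).symm.trans (hx (i, j'))
      have e0 := E 0
      simp +decide [Fin.sum_univ_one, gram] at e0
      have h0 : x (i, 0) = 0 := by linarith
      fin_cases j <;> [exact h0]
    exact master 2 8 k (by norm_num) ⟨(⟨0, by norm_num⟩, ⟨0, by norm_num⟩)⟩
      hrhoD hrhoN hrr hvpD hnd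
  · -- p = 3, ν = 6
    have hrhoD : ∀ q, Bf 3 6 (rho 3 6) (Dv 3 6 q) = 1 := by
      intro q
      obtain ⟨i, j⟩ := q
      rw [Bf_Dv_fiber]
      fin_cases j <;>
        (simp [Fin.sum_univ_succ, gram, rho] <;> norm_num)
    have hrhoN : rho 3 6 ∈ NL 3 6 k := by
      refine mem_NL_of 3 6 k (fun a => ![-1, -1] a.2) 0 _ ?_
      funext a
      obtain ⟨i, j⟩ := a
      fin_cases j <;> norm_num [Fin.sum_univ_succ, Fin.val_succ, Fin.val_zero, Fin.ext_iff, gram, rho, varpi]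
    have hrr : Bf 3 6 (rho 3 6) (rho 3 6) = -2 * ((3:ℕ):ℚ) * (((3:ℕ):ℚ) - 1) := by
      rw [Bf_rho_rho 3 6 hrhoD, Fintype.sum_prod_type]
      norm_num [Fin.sum_univ_succ, Fin.val_succ, Fin.val_zero, rho]
    have hvpD : ∀ q, ∃ m : ℤ, Bf 3 6 (varpi 3 6 k) (Dv 3 6 q) = m := by
      intro q
      obtain ⟨i, j⟩ := q
      rw [Bf_Dv_fiber]
      fin_cases j <;> [exact ⟨0, by (simp [Fin.sum_univ_succ, gram, rho, varpi] <;> norm_num) <;> push_cast <;> ring⟩; exact ⟨-k i, by (simp [Fin.sum_univ_succ, gram, rho, varpi] <;> norm_num) <;> push_cast <;> ring⟩]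
    have hnd : ∀ x : Idx 3 6 → ℚ, (∀ q, Bf 3 6 x (Dv 3 6 q) = 0) → x = 0 := by
      intro x hx
      funext q
      rw [Pi.zero_apply]
      obtain ⟨i, j⟩ := q
      have E : ∀ j' : Fin 2, ∑ j'' : Fin 2, x (i, j'') * gram 3 6 (i, j'') (i, j') = 0 :=
        fun j' => (Bf_Dv_fiber 3 6 x (i, j')).symm.trans (hx (i, j'))
      have e0 := E 0
      have e1 := E 1
      simp +decide [Fin.sum_univ_two, gram] at e0 e1
      have h0 : x (i, 0) = 0 := by linarith
      have h1 : x (i, 1) = 0 := by linarith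
      fin_cases j <;> [exact h0; exact h1]
    exact master 3 6 k (by norm_num) ⟨(⟨0, by norm_num⟩, ⟨0, by norm_num⟩)⟩
      hrhoD hrhoN hrr hvpD hnd
  · -- p = 5, ν = 4
    have hrhoD : ∀ q, Bf 5 4 (rho 5 4) (Dv 5 4 q) = 1 := by
      intro q
      obtain ⟨i, j⟩ := q
      rw [Bf_Dv_fiber]
      fin_cases j <;>
        (simp [Fin.sum_univ_succ, gram, rho] <;> norm_num)
    have hrhoN : rho 5 4 ∈ NL 5 4 k := by
      refine mem_NL_of 5 4 k (fun a => ![-2, -3, -3, -2] a.2) 0 _ ?_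
      funext a
      obtain ⟨i, j⟩ := a
      fin_cases j <;> norm_num [Fin.sum_univ_succ, Fin.val_succ, Fin.val_zero, Fin.ext_iff, gram, rho, varpi]
    have hrr : Bf 5 4 (rho 5 4) (rho 5 4) = -2 * ((5:ℕ):ℚ) * (((5:ℕ):ℚ) - 1) := by
      rw [Bf_rho_rho 5 4 hrhoD, Fintype.sum_prod_type]
      norm_num [Fin.sum_univ_succ, Fin.val_succ, Fin.val_zero, rho]
    have hvpD : ∀ q, ∃ m : ℤ, Bf 5 4 (varpi 5 4 k) (Dv 5 4 q) = m := by
      intro q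
      obtain ⟨i, j⟩ := q
      rw [Bf_Dv_fiber]
      fin_cases j <;> [exact ⟨0, by (simp [Fin.sum_univ_succ, gram, rho, varpi] <;> norm_num) <;> push_cast <;> ring⟩; exact ⟨0, by (simp [Fin.sum_univ_succ, gram, rho, varpi] <;> norm_num) <;> push_cast <;> ring⟩; exact ⟨0, by (simp [Fin.sum_univ_succ, gram, rho, varpi] <;> norm_num) <;> push_cast <;> ring⟩; exact ⟨-k i, by (simp [Fin.sum_univ_succ, gram, rho, varpi] <;> norm_num) <;> push_cast <;> ring⟩]
    have hnd : ∀ x : Idx 5 4 → ℚ, (∀ q, Bf 5 4 x (Dv 5 4 q) = 0) → x = 0 := by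
      intro x hx
      funext q
      rw [Pi.zero_apply]
      obtain ⟨i, j⟩ := q
      have E : ∀ j' : Fin 4, ∑ j'' : Fin 4, x (i, j'') * gram 5 4 (i, j'') (i, j') = 0 :=
        fun j' => (Bf_Dv_fiber 5 4 x (i, j')).symm.trans (hx (i, j'))
      have e0 := E 0
      have e1 := E 1
      have e2 := E 2
      have e3 := E 3
      simp +decide [Fin.sum_univ_four, gram] at e0 e1 e2 e3
      have h0 : x (i, 0) = 0 := by linarith
      have h1 : x (i, 1) = 0 := by linarith
      have h2 : x (i, 2) = 0 := by linarith
      have h3 : x (i, 3) = 0 := by linarith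
      fin_cases j <;> [exact h0; exact h1; exact h2; exact h3]
    exact master 5 4 k (by norm_num) ⟨(⟨0, by norm_num⟩, ⟨0, by norm_num⟩)⟩
      hrhoD hrhoN hrr hvpD hnd
  · -- p = 7, ν = 3
    have hrhoD : ∀ q, Bf 7 3 (rho 7 3) (Dv 7 3 q) = 1 := by
      intro q
      obtain ⟨i, j⟩ := q
      rw [Bf_Dv_fiber]
      fin_cases j <;>
        (simp [Fin.sum_univ_succ, gram, rho] <;> norm_num)
    have hrhoN : rho 7 3 ∈ NL 7 3 k := by
      refine mem_NL_of 7 3 k (fun a => ![-3, -5, -6, -6, -5, -3] a.2) 0 _ ?_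
      funext a
      obtain ⟨i, j⟩ := a
      fin_cases j <;> norm_num [Fin.sum_univ_succ, Fin.val_succ, Fin.val_zero, Fin.ext_iff, gram, rho, varpi]
    have hrr : Bf 7 3 (rho 7 3) (rho 7 3) = -2 * ((7:ℕ):ℚ) * (((7:ℕ):ℚ) - 1) := by
      rw [Bf_rho_rho 7 3 hrhoD, Fintype.sum_prod_type]
      norm_num [Fin.sum_univ_succ, Fin.val_succ, Fin.val_zero, rho]
    have hvpD : ∀ q, ∃ m : ℤ, Bf 7 3 (varpi 7 3 k) (Dv 7 3 q) = m := by
      intro q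
      obtain ⟨i, j⟩ := q
      rw [Bf_Dv_fiber]
      fin_cases j <;> [exact ⟨0, by (simp [Fin.sum_univ_succ, gram, rho, varpi] <;> norm_num) <;> push_cast <;> ring⟩; exact ⟨0, by (simp [Fin.sum_univ_succ, gram, rho, varpi] <;> norm_num) <;> push_cast <;> ring⟩; exact ⟨0, by (simp [Fin.sum_univ_succ, gram, rho, varpi] <;> norm_num) <;> push_cast <;> ring⟩; exact ⟨0, by (simp [Fin.sum_univ_succ, gram, rho, varpi] <;> norm_num) <;> push_cast <;> ring⟩; exact ⟨0, by (simp [Fin.sum_univ_succ, gram, rho, varpi] <;> norm_num) <;> push_cast <;> ring⟩; exact ⟨-k i, by (simp [Fin.sum_univ_succ, gram, rho, varpi] <;> norm_num) <;> push_cast <;> ring⟩]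
    have hnd : ∀ x : Idx 7 3 → ℚ, (∀ q, Bf 7 3 x (Dv 7 3 q) = 0) → x = 0 := by
      intro x hx
      funext q
      rw [Pi.zero_apply]
      obtain ⟨i, j⟩ := q
      have E : ∀ j' : Fin 6, ∑ j'' : Fin 6, x (i, j'') * gram 7 3 (i, j'') (i, j') = 0 :=
        fun j' => (Bf_Dv_fiber 7 3 x (i, j')).symm.trans (hx (i, j'))
      have e0 := E 0
      have e1 := E 1
      have e2 := E 2
      have e3 := E 3
      have e4 := E 4
      have e5 := E 5
      simp +decide [Fin.sum_univ_six, gram] at e0 e1 e2 e3 e4 e5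
      have h0 : x (i, 0) = 0 := by linarith
      have h1 : x (i, 1) = 0 := by linarith
      have h2 : x (i, 2) = 0 := by linarith
      have h3 : x (i, 3) = 0 := by linarith
      have h4 : x (i, 4) = 0 := by linarith
      have h5 : x (i, 5) = 0 := by linarith
      fin_cases j <;> [exact h0; exact h1; exact h2; exact h3; exact h4; exact h5]
    exact master 7 3 k (by norm_num) ⟨(⟨0, by norm_num⟩, ⟨0, by norm_num⟩)⟩
      hrhoD hrhoN hrr hvpD hnd
end
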